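/- arXiv:1706.09052 — 2 statements merged into one kernel-verified Lean document; each statement's English description precedes it below -/
import Mathlib

section
/- Let G be a finite simple graph that is (P1 ⊕ P3)-free. Then the vertex set of G can be partitioned into two disjoint sets A and B such that the subgraph induced by A is 3P1-free, the subgraph induced by B is P4-free, and every vertex of A is adjacent to every vertex of B. -/
open SimpleGraph

universe u
variable {V : Type*} {W : Type*}

/-- `H` is isomorphic to an induced subgraph of `G`. -/
def SimpleGraph.IsIndSubgraph {W V : Type*} (H : SimpleGraph W) (G : SimpleGraph V) : Prop :=
  ∃ f : W ↪ V, ∀ a b, G.Adj (f a) (f b) ↔ H.Adj a b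

/-- A set of pairwise non-adjacent vertices. -/
def SimpleGraph.IsIndepSet' (G : SimpleGraph V) (s : Set V) : Prop :=
  s.Pairwise fun a b => ¬ G.Adj a b

/-- The independence number of `G`. -/
noncomputable def SimpleGraph.indepNum' (G : SimpleGraph V) : ℕ :=
  sSup {n | ∃ s : Set V, G.IsIndepSet' s ∧ s.ncard = n}

/-- A matching, viewed as a set of pairwise disjoint edges of `G`. -/
def SimpleGraph.IsMatchingSet (G : SimpleGraph V) (M : Set (Sym2 V)) : Prop :=
  M ⊆ G.edgeSet ∧ M.Pairwise fun e f => ∀ x, x ∈ e → x ∉ f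

/-- The matching number of `G`. -/
noncomputable def SimpleGraph.matchingNum (G : SimpleGraph V) : ℕ :=
  sSup {n | ∃ M : Set (Sym2 V), G.IsMatchingSet M ∧ M.ncard = n}

/-- A vertex cover. -/
def SimpleGraph.IsVertexCover' (G : SimpleGraph V) (C : Set V) : Prop :=
  ∀ u v, G.Adj u v → u ∈ C ∨ v ∈ C

/-- Contraction of the edge `uv`, identifying the new vertex with `v`. -/
def SimpleGraph.contractEdge (G : SimpleGraph V) (u v : V) : SimpleGraph {x : V // x ≠ u} where
  Adj x y := x ≠ y ∧ (G.Adj x y ∨ (x.1 = v ∧ G.Adj u y) ∨ (y.1 = v ∧ G.Adj u x))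
  symm := by
    constructor
    rintro x y ⟨hne, h⟩
    refine ⟨hne.symm, ?_⟩
    rcases h with h | h | h
    · exact Or.inl h.symm
    · exact Or.inr (Or.inr h)
    · exact Or.inr (Or.inl h)
  loopless := ⟨fun x h => h.1 rfl⟩

/-- A maximal clique. -/
def SimpleGraph.IsMaxlClique (G : SimpleGraph V) (K : Set V) : Prop :=
  G.IsClique K ∧ ∀ K' : Set V, G.IsClique K' → K ⊆ K' → K' = K

/-- If `a-b-c` is an induced `P3` and `d` is a further vertex non-adjacent to all of it,
then `G` contains an induced `P1 ⊕ P3`. -/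
lemma p1p3_of_config {G : SimpleGraph V}
    (hfree : ¬ (SimpleGraph.fromEdgeSet
        ({s(1, 2), s(2, 3)} : Set (Sym2 (Fin 4)))).IsIndSubgraph G)
    {a b c d : V} (hab : G.Adj a b) (hbc : G.Adj b c) (hac : ¬ G.Adj a c)
    (hda : ¬ G.Adj d a) (hdb : ¬ G.Adj d b) (hdc : ¬ G.Adj d c)
    (hac' : a ≠ c) (hda' : d ≠ a) (hdc' : d ≠ c) : False := by
  apply hfree
  have hdb' : d ≠ b := fun h => hda (h ▸ hab.symm)
  have hab' : a ≠ b := hab.ne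
  have hbc' : b ≠ c := hbc.ne
  have hca : ¬ G.Adj c a := fun h => hac h.symm
  have had : ¬ G.Adj a d := fun h => hda h.symm
  have hbd : ¬ G.Adj b d := fun h => hdb h.symm
  have hcd : ¬ G.Adj c d := fun h => hdc h.symm
  refine ⟨⟨![d, a, b, c], ?_⟩, ?_⟩
  · intro i j hij
    fin_cases i <;> fin_cases j <;>
      simp_all [hab'.symm, hbc'.symm, hac'.symm, hda'.symm, hdb'.symm, hdc'.symm]
  · intro i j
    show G.Adj (![d, a, b, c] i) (![d, a, b, c] j) ↔ _
    fin_cases i <;> fin_cases j <;>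
      simp [Function.Embedding.coeFn_mk, SimpleGraph.fromEdgeSet_adj, hab, hbc, hab.symm, hbc.symm, hac, hda, hdb, hdc,
        hca, had, hbd, hcd, Sym2.eq_iff]

/-- `v` belongs to some independent triple. -/
def InTriple (G : SimpleGraph V) (v : V) : Prop :=
  ∃ y z, v ≠ y ∧ v ≠ z ∧ y ≠ z ∧ ¬ G.Adj v y ∧ ¬ G.Adj v z ∧ ¬ G.Adj y z

lemma inTriple_step {G : SimpleGraph V}
    (hfree : ¬ (SimpleGraph.fromEdgeSet
        ({s(1, 2), s(2, 3)} : Set (Sym2 (Fin 4)))).IsIndSubgraph G)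
    {c n : V} (hT : InTriple G c) (hadj : Gᶜ.Adj c n) : InTriple G n := by
  obtain ⟨y, z, hcy, hcz, hyz, ncy, ncz, nyz⟩ := hT
  rw [SimpleGraph.compl_adj] at hadj
  obtain ⟨hcn, ncn⟩ := hadj
  have nnc : ¬ G.Adj n c := fun h => ncn h.symm
  by_cases hny : n = y
  · subst hny
    exact ⟨c, z, hcn.symm, hyz, hcz, nnc, nyz, ncz⟩
  by_cases hnz : n = z
  · subst hnz
    exact ⟨c, y, hcn.symm, fun h => hyz h.symm, hcy, nnc,
      fun h => nyz h.symm, ncy⟩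
  by_cases h1 : G.Adj n y <;> by_cases h2 : G.Adj n z
  · exact absurd (p1p3_of_config hfree h1.symm h2 nyz ncy ncn ncz hyz hcy hcz) not_false
  · exact ⟨c, z, hcn.symm, hnz, hcz, nnc, h2, ncz⟩
  · exact ⟨c, y, hcn.symm, hny, hcy, nnc, h1, ncy⟩
  · exact ⟨y, z, hny, hnz, hyz, h1, h2, nyz⟩

lemma inTriple_reach {G : SimpleGraph V}
    (hfree : ¬ (SimpleGraph.fromEdgeSet
        ({s(1, 2), s(2, 3)} : Set (Sym2 (Fin 4)))).IsIndSubgraph G)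
    {x v : V} (h : Gᶜ.Reachable x v) : InTriple G x → InTriple G v := by
  obtain ⟨w⟩ := h
  induction w with
  | nil => exact id
  | cons h p ih => exact fun ht => ih (inTriple_step hfree ht h)

/-- Any vertex `u ≠ p2, p4` non-adjacent to `p2` must be adjacent to `p4`,
for an induced path `p1 p2 p3 p4`. -/
lemma side_lemma {G : SimpleGraph V}
    (hfree : ¬ (SimpleGraph.fromEdgeSet
        ({s(1, 2), s(2, 3)} : Set (Sym2 (Fin 4)))).IsIndSubgraph G)
    {p1 p2 p3 p4 u : V}
    (a12 : G.Adj p1 p2) (a23 : G.Adj p2 p3) (a34 : G.Adj p3 p4)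
    (n13 : ¬ G.Adj p1 p3) (n14 : ¬ G.Adj p1 p4) (n24 : ¬ G.Adj p2 p4)
    (nu2 : ¬ G.Adj u p2) (hu2 : u ≠ p2) (hu4 : u ≠ p4) : G.Adj p4 u := by
  have hu1 : u ≠ p1 := fun h => nu2 (h ▸ a12)
  have hu3 : u ≠ p3 := fun h => nu2 (h ▸ a23.symm)
  have ne24 : p2 ≠ p4 := fun h => n14 (h ▸ a12)
  have ne13 : p1 ≠ p3 := fun h => n14 (h ▸ a34)
  have ne14 : p1 ≠ p4 := by rintro rfl; exact n13 a34.symm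
  by_contra nu4
  have nu4' : ¬ G.Adj u p4 := fun h => nu4 h.symm
  by_cases h1 : G.Adj p1 u
  · -- P3 : u - p1 - p2, isolated d = p4
    exact p1p3_of_config hfree h1.symm a12 nu2 nu4 (fun h => n14 h.symm)
      (fun h => n24 h.symm) hu2 (hu4.symm) ne24.symm
  · by_cases h3 : G.Adj p3 u
    · -- P3 : u - p3 - p4, isolated d = p1
      exact p1p3_of_config hfree h3.symm a34 nu4' h1 n13 n14 hu4 hu1.symm ne14
    · -- P3 : p1 - p2 - p3, isolated d = u
      exact p1p3_of_config hfree a12 a23 n13 (fun h => h1 h.symm) nu2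
        (fun h => h3 h.symm) ne13 hu1 hu3

/-- Special case: the independent triple through `p2` contains `p4`. -/
lemma eq_case {G : SimpleGraph V}
    (hfree : ¬ (SimpleGraph.fromEdgeSet
        ({s(1, 2), s(2, 3)} : Set (Sym2 (Fin 4)))).IsIndSubgraph G)
    {p1 p2 p3 p4 w : V}
    (a12 : G.Adj p1 p2) (a23 : G.Adj p2 p3) (a34 : G.Adj p3 p4)
    (n13 : ¬ G.Adj p1 p3) (n14 : ¬ G.Adj p1 p4) (n24 : ¬ G.Adj p2 p4)
    (nw2 : ¬ G.Adj w p2) (hw2 : w ≠ p2) (hw4 : w ≠ p4) (nw4 : ¬ G.Adj w p4) : False := by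
  have hw1 : w ≠ p1 := fun h => nw2 (h ▸ a12)
  have hw3 : w ≠ p3 := fun h => nw2 (h ▸ a23.symm)
  have ne24 : p2 ≠ p4 := fun h => n14 (h ▸ a12)
  have ne14 : p1 ≠ p4 := by rintro rfl; exact n13 a34.symm
  have n1w : ¬ G.Adj p1 w := by
    intro h
    -- P3 : p2 - p1 - w, isolated d = p4
    exact p1p3_of_config hfree a12.symm h (fun hh => nw2 hh.symm) (fun hh => n24 hh.symm)
      (fun hh => n14 hh.symm) (fun hh => nw4 hh.symm) hw2.symm ne24.symm hw4.symm
  have h3w : G.Adj p3 w := by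
    by_contra h
    -- P3 : p2 - p3 - p4, isolated d = w
    exact p1p3_of_config hfree a23 a34 n24 nw2 (fun hh => h hh.symm) nw4 ne24 hw2 hw4
  -- P3 : w - p3 - p4, isolated d = p1
  exact p1p3_of_config hfree h3w.symm a34 nw4 n1w n13 n14 hw4 hw1.symm ne14

/-- The main combinatorial lemma: an independent triple through the second vertex of an
induced `P4` yields a contradiction. -/
lemma main_lemma {G : SimpleGraph V}
    (hfree : ¬ (SimpleGraph.fromEdgeSet
        ({s(1, 2), s(2, 3)} : Set (Sym2 (Fin 4)))).IsIndSubgraph G)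
    {p1 p2 p3 p4 u w : V}
    (a12 : G.Adj p1 p2) (a23 : G.Adj p2 p3) (a34 : G.Adj p3 p4)
    (n13 : ¬ G.Adj p1 p3) (n14 : ¬ G.Adj p1 p4) (n24 : ¬ G.Adj p2 p4)
    (hu : p2 ≠ u) (hw : p2 ≠ w) (huw : u ≠ w)
    (nu : ¬ G.Adj p2 u) (nw : ¬ G.Adj p2 w) (nuw : ¬ G.Adj u w) : False := by
  have nu2 : ¬ G.Adj u p2 := fun h => nu h.symm
  have nw2 : ¬ G.Adj w p2 := fun h => nw h.symm
  by_cases hup : u = p4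
  · subst hup
    exact eq_case hfree a12 a23 a34 n13 n14 n24 nw2 hw.symm (fun h => huw h.symm)
      (fun h => nuw h.symm)
  by_cases hwp : w = p4
  · subst hwp
    exact eq_case hfree a12 a23 a34 n13 n14 n24 nu2 hu.symm huw nuw
  have h4u := side_lemma hfree a12 a23 a34 n13 n14 n24 nu2 hu.symm hup
  have h4w := side_lemma hfree a12 a23 a34 n13 n14 n24 nw2 hw.symm hwp
  -- P3 : u - p4 - w, isolated d = p2
  exact p1p3_of_config hfree h4u.symm h4w nuw nu n24 nw huw hu hw


/-- The vertex set of a `(P1 ⊕ P3)`-free graph can be partitioned into a `3P1`-free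
part `A` and a `P4`-free part `B` that are complete to each other. -/
theorem stmt3 {V : Type*} [Fintype V] (G : SimpleGraph V)
    (hfree : ¬ (SimpleGraph.fromEdgeSet
        ({s(1, 2), s(2, 3)} : Set (Sym2 (Fin 4)))).IsIndSubgraph G) :
    ∃ A B : Set V, A ∪ B = Set.univ ∧ Disjoint A B ∧
      ¬ (⊥ : SimpleGraph (Fin 3)).IsIndSubgraph (G.induce A) ∧
      ¬ (pathGraph 4).IsIndSubgraph (G.induce B) ∧
      ∀ a ∈ A, ∀ b ∈ B, G.Adj a b := by
  classical
  set B : Set V := {v | ∃ x, InTriple G x ∧ Gᶜ.Reachable v x} with hB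
  refine ⟨Bᶜ, B, Set.compl_union_self _, disjoint_compl_left, ?_, ?_, ?_⟩
  · rintro ⟨f, hf⟩
    have hne : ∀ i j : Fin 3, i ≠ j → ((f i : V) : V) ≠ (f j : V) := by
      intro i j hij h
      exact hij (f.injective (Subtype.ext h))
    have hadj : ∀ i j : Fin 3, ¬ G.Adj (f i : V) (f j : V) := by
      intro i j h
      have := (hf i j).mp (by simpa using h)
      simp at this
    have hmem : ((f 0 : V) : V) ∈ Bᶜ := (f 0).2
    apply hmem
    refine ⟨(f 0 : V), ⟨(f 1 : V), (f 2 : V), hne 0 1 (by decide), hne 0 2 (by decide),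
      hne 1 2 (by decide), hadj 0 1, hadj 0 2, hadj 1 2⟩, Reachable.refl _⟩
  · rintro ⟨f, hf⟩
    have hia : ∀ i j : Fin 4, (G.induce B).Adj (f i) (f j) ↔ G.Adj (f i : V) (f j : V) := by
      intro i j
      simp [SimpleGraph.comap_adj, SimpleGraph.induce]
    have hadj : ∀ i j : Fin 4, (pathGraph 4).Adj i j → G.Adj (f i : V) (f j : V) := by
      intro i j h
      exact (hia i j).mp ((hf i j).mpr h)
    have hnadj : ∀ i j : Fin 4, ¬ (pathGraph 4).Adj i j → ¬ G.Adj (f i : V) (f j : V) := by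
      intro i j h hh
      exact h ((hf i j).mp ((hia i j).mpr hh))
    have a12 : G.Adj (f 0 : V) (f 1 : V) := hadj 0 1 (by simp only [SimpleGraph.pathGraph_adj]; decide)
    have a23 : G.Adj (f 1 : V) (f 2 : V) := hadj 1 2 (by simp only [SimpleGraph.pathGraph_adj]; decide)
    have a34 : G.Adj (f 2 : V) (f 3 : V) := hadj 2 3 (by simp only [SimpleGraph.pathGraph_adj]; decide)
    have n13 : ¬ G.Adj (f 0 : V) (f 2 : V) := hnadj 0 2 (by simp only [SimpleGraph.pathGraph_adj]; decide)
    have n14 : ¬ G.Adj (f 0 : V) (f 3 : V) := hnadj 0 3 (by simp only [SimpleGraph.pathGraph_adj]; decide)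
    have n24 : ¬ G.Adj (f 1 : V) (f 3 : V) := hnadj 1 3 (by simp only [SimpleGraph.pathGraph_adj]; decide)
    obtain ⟨x, hTx, hrx⟩ := (f 1).2
    obtain ⟨u, w, hu, hw, huw, nu, nw, nuw⟩ := inTriple_reach hfree hrx.symm hTx
    exact main_lemma hfree a12 a23 a34 n13 n14 n24 hu hw huw nu nw nuw
  · intro a ha b hb
    by_contra hadj
    have hab : a ≠ b := fun h => ha (h ▸ hb)
    obtain ⟨x, hx, hr⟩ := hb
    exact ha ⟨x, hx, (SimpleGraph.Adj.reachable (by simp [SimpleGraph.compl_adj, hab, hadj])).trans hr⟩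
end

section
/- Let T be a tree on n vertices and let uv be an edge of T. Then the contraction T/uv is a tree on n − 1 vertices, and exactly one of the following holds: α(T/uv) = α(T) − 1 and μ(T/uv) = μ(T), or μ(T/uv) = μ(T) − 1 and α(T/uv) = α(T). -/
open SimpleGraph

universe u
variable {V : Type*} {W : Type*}

lemma contractEdge_adj_iff {G : SimpleGraph V} {u v : V} {x y : {x : V // x ≠ u}} :
    (G.contractEdge u v).Adj x y ↔
      x ≠ y ∧ (G.Adj x y ∨ (x.1 = v ∧ G.Adj u y) ∨ (y.1 = v ∧ G.Adj u x)) := Iff.rfl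

lemma indep_nonempty (G : SimpleGraph V) :
    Set.Nonempty {n | ∃ s : Set V, G.IsIndepSet' s ∧ s.ncard = n} :=
  ⟨0, ∅, Set.pairwise_empty _, Set.ncard_empty _⟩

lemma indep_bdd [Fintype V] (G : SimpleGraph V) :
    BddAbove {n | ∃ s : Set V, G.IsIndepSet' s ∧ s.ncard = n} := by
  refine ⟨Fintype.card V, ?_⟩
  rintro n ⟨s, -, rfl⟩
  calc s.ncard ≤ (Set.univ : Set V).ncard := Set.ncard_le_ncard (Set.subset_univ s) Set.finite_univ
  _ = Fintype.card V := by simp [Set.ncard_univ, Nat.card_eq_fintype_card]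

lemma exists_max_indep [Fintype V] (G : SimpleGraph V) :
    ∃ s : Set V, G.IsIndepSet' s ∧ s.ncard = G.indepNum' :=
  Nat.sSup_mem (indep_nonempty G) (indep_bdd G)

lemma ncard_le_indepNum [Fintype V] {G : SimpleGraph V} {s : Set V} (h : G.IsIndepSet' s) :
    s.ncard ≤ G.indepNum' :=
  le_csSup (indep_bdd G) ⟨s, h, rfl⟩

lemma indepNum_le [Fintype V] {G : SimpleGraph V} {m : ℕ}
    (h : ∀ s : Set V, G.IsIndepSet' s → s.ncard ≤ m) : G.indepNum' ≤ m := by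
  refine csSup_le (indep_nonempty G) ?_
  rintro n ⟨s, hs, rfl⟩
  exact h s hs

lemma matching_nonempty (G : SimpleGraph V) :
    Set.Nonempty {n | ∃ M : Set (Sym2 V), G.IsMatchingSet M ∧ M.ncard = n} :=
  ⟨0, ∅, ⟨Set.empty_subset _, Set.pairwise_empty _⟩, Set.ncard_empty _⟩

lemma matching_bdd [Fintype V] [DecidableEq V] (G : SimpleGraph V) :
    BddAbove {n | ∃ M : Set (Sym2 V), G.IsMatchingSet M ∧ M.ncard = n} := by
  refine ⟨Fintype.card (Sym2 V), ?_⟩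
  rintro n ⟨M, -, rfl⟩
  calc M.ncard ≤ (Set.univ : Set (Sym2 V)).ncard :=
      Set.ncard_le_ncard (Set.subset_univ M) Set.finite_univ
  _ = Fintype.card (Sym2 V) := by simp [Set.ncard_univ, Nat.card_eq_fintype_card]

lemma exists_max_matching [Fintype V] [DecidableEq V] (G : SimpleGraph V) :
    ∃ M : Set (Sym2 V), G.IsMatchingSet M ∧ M.ncard = G.matchingNum :=
  Nat.sSup_mem (matching_nonempty G) (matching_bdd G)

lemma ncard_le_matchingNum [Fintype V] [DecidableEq V] {G : SimpleGraph V} {M : Set (Sym2 V)}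
    (h : G.IsMatchingSet M) : M.ncard ≤ G.matchingNum :=
  le_csSup (matching_bdd G) ⟨M, h, rfl⟩

lemma matchingNum_le [Fintype V] {G : SimpleGraph V} {m : ℕ}
    (h : ∀ M : Set (Sym2 V), G.IsMatchingSet M → M.ncard ≤ m) : G.matchingNum ≤ m := by
  refine csSup_le (matching_nonempty G) ?_
  rintro n ⟨M, hM, rfl⟩
  exact h M hM

lemma reach_lift {A B : Type*} {H : SimpleGraph A} {K : SimpleGraph B} (g : A → B)
    (hadj : ∀ a b, H.Adj a b → K.Reachable (g a) (g b)) {a b : A} (p : H.Walk a b) :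
    K.Reachable (g a) (g b) := by
  induction p with
  | nil => exact Reachable.refl _
  | cons h q ih => exact (hadj _ _ h).trans ih

lemma exists_leaf {V : Type*} [Fintype V] {G : SimpleGraph V} (hG : G.IsAcyclic)
    {x y : V} (hxy : G.Adj x y) :
    ∃ a b : V, G.Adj a b ∧ ∀ c, G.Adj a c → c = b := by
  classical
  set L : Set ℕ := {l | ∃ (a b : V) (p : G.Walk a b), p.IsPath ∧ p.length = l} with hL
  have hone : (1 : ℕ) ∈ L := ⟨x, y, Walk.cons hxy Walk.nil, by simp [Walk.isPath_def, hxy.ne], by simp⟩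
  have hne : L.Nonempty := ⟨1, hone⟩
  have hbdd : BddAbove L := by
    refine ⟨Fintype.card V, ?_⟩
    rintro l ⟨a, b, p, hp, rfl⟩
    exact hp.length_lt.le
  obtain ⟨a, b, p, hp, hlen⟩ := Nat.sSup_mem hne hbdd
  have h1 : 1 ≤ sSup L := le_csSup hbdd hone
  cases p with
  | nil => simp at hlen; omega
  | cons h q =>
    rename_i c
    refine ⟨a, c, h, ?_⟩
    intro d had
    by_contra hdc
    rw [Walk.cons_isPath_iff] at hp
    by_cases hd : d ∈ q.support
    · set r := q.takeUntil d hd with hr'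
      have hr : r.IsPath := hp.1.takeUntil hd
      have hna : a ∉ r.support := fun hmem => hp.2 (Walk.support_takeUntil_subset _ hd hmem)
      refine hG (Walk.cons h (r.concat had.symm)) ?_
      rw [Walk.cons_isCycle_iff]
      constructor
      · rw [← Walk.isPath_reverse_iff, Walk.reverse_concat]
        exact hr.reverse.cons (by simpa using hna)
      · rw [Walk.edges_concat]
        simp only [List.concat_eq_append, List.mem_append, List.mem_singleton]
        rintro (hmem | hmem)
        · exact hna (Walk.fst_mem_support_of_mem_edges r hmem)
        · rw [Sym2.eq_iff] at hmem
          rcases hmem with ⟨rfl, -⟩ | ⟨-, hcd⟩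
          · exact had.ne rfl
          · exact hdc hcd.symm
    · have hpath : (Walk.cons had.symm (Walk.cons h q)).IsPath := by
        rw [Walk.cons_isPath_iff]
        refine ⟨(Walk.cons_isPath_iff h q).2 hp, ?_⟩
        simp only [Walk.support_cons, List.mem_cons]
        rintro (rfl | hmem)
        · exact had.ne rfl
        · exact hd hmem
      have h2 : sSup L + 1 ≤ sSup L := by
        refine le_csSup hbdd ⟨d, b, _, hpath, ?_⟩
        simp only [Walk.length_cons] at hlen ⊢
        omega
      omega

lemma disj_symm {A : Type*} : Symmetric (fun e f : Sym2 A => ∀ x, x ∈ e → x ∉ f) :=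
  fun _ _ h x hxf hxe => h x hxe hxf

lemma forest_GK : ∀ (n : ℕ) {V : Type u} [Fintype V] [DecidableEq V] (G : SimpleGraph V),
    G.IsAcyclic → Fintype.card V = n → G.indepNum' + G.matchingNum = n := by
  intro n
  induction n using Nat.strong_induction_on with
  | _ n IH =>
    intro V _ _ G hG hcard
    by_cases hE : ∃ x y, G.Adj x y
    · obtain ⟨x, y, hxy⟩ := hE
      obtain ⟨a, b, hab, hleaf⟩ := exists_leaf hG hxy
      have hab' : a ≠ b := hab.ne
      set V' := {w : V // w ≠ a ∧ w ≠ b} with hV'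
      set G' : SimpleGraph V' := G.comap Subtype.val with hG'
      have hG'adj : ∀ p q : V', G'.Adj p q ↔ G.Adj p.1 q.1 := fun p q => Iff.rfl
      -- cardinality
      have hcard' : Fintype.card V' = n - 2 := by
        rw [Fintype.card_subtype]
        have : (Finset.univ.filter fun w : V => w ≠ a ∧ w ≠ b) = Finset.univ \ {a, b} := by
          ext w; simp [and_comm]
        rw [this, Finset.card_sdiff_of_subset (Finset.subset_univ _)]
        rw [Finset.card_insert_of_notMem (by simp [hab']), Finset.card_singleton,
          Finset.card_univ, hcard]
      have hn2 : 2 ≤ n := by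
        have h2 : ({a, b} : Finset V).card ≤ Fintype.card V := Finset.card_le_univ _
        rw [Finset.card_insert_of_notMem (by simp [hab']), Finset.card_singleton, hcard] at h2
        exact h2
      -- acyclicity of G'
      have hG'acyc : G'.IsAcyclic := by
        intro w c hc
        exact hG _ (hc.map Subtype.val_injective (f := (⟨Subtype.val, fun {p q} h => h⟩ : G' →g G)))
      have hGK' := IH (n - 2) (by omega) G' hG'acyc hcard'
      have hsym : Symmetric fun p q : V => ¬ G.Adj p q := fun p q h hadj => h hadj.symm
      -- (A)
      have hA : G'.indepNum' + 1 ≤ G.indepNum' := by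
        obtain ⟨s', hs', hcs'⟩ := exists_max_indep G'
        have hnotmem : a ∉ Subtype.val '' s' := by
          rintro ⟨p, -, hp⟩; exact p.2.1 hp
        have hindep : G.IsIndepSet' (insert a (Subtype.val '' s')) := by
          haveI : Std.Symm (fun p q : V => ¬ G.Adj p q) := ⟨fun _ _ h => hsym h⟩
          refine (Set.pairwise_insert_of_symm).2 ⟨?_, ?_⟩
          · rintro p ⟨p', hp', rfl⟩ q ⟨q', hq', rfl⟩ hne hadj
            exact hs' hp' hq' (fun h => hne (congrArg Subtype.val h)) hadj
          · rintro p ⟨p', hp', rfl⟩ - hadj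
            exact p'.2.2 (hleaf _ hadj)
        have hcnt : (insert a (Subtype.val '' s')).ncard = G'.indepNum' + 1 := by
          rw [Set.ncard_insert_of_notMem hnotmem (Set.toFinite _),
            Set.ncard_image_of_injective _ Subtype.val_injective, hcs']
        calc G'.indepNum' + 1 = _ := hcnt.symm
        _ ≤ G.indepNum' := ncard_le_indepNum hindep
      -- (B)
      have hB : G.indepNum' ≤ G'.indepNum' + 1 := by
        obtain ⟨s, hs, hcs⟩ := exists_max_indep G
        have ht : G'.IsIndepSet' (Subtype.val ⁻¹' s) := fun p hp q hq hne hadj =>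
          hs hp hq (fun h => hne (Subtype.ext h)) hadj
        have himg : Subtype.val '' (Subtype.val ⁻¹' s : Set V') = s \ {a, b} := by
          ext z
          constructor
          · rintro ⟨p, hp, rfl⟩
            exact ⟨hp, by simp [p.2.1, p.2.2]⟩
          · rintro ⟨hz, hz2⟩
            simp only [Set.mem_insert_iff, Set.mem_singleton_iff, not_or] at hz2
            exact ⟨⟨z, hz2.1, hz2.2⟩, hz, rfl⟩
        have hct : (Subtype.val ⁻¹' s : Set V').ncard = (s \ {a, b}).ncard := by
          rw [← himg, Set.ncard_image_of_injective _ Subtype.val_injective]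
        have hnotboth : ¬(a ∈ s ∧ b ∈ s) := by
          rintro ⟨ha, hb⟩
          exact hs ha hb hab' hab
        have hdiff : s.ncard ≤ (s \ {a, b}).ncard + 1 := by
          by_cases ha : a ∈ s
          · have hbns : b ∉ s := fun hb => hnotboth ⟨ha, hb⟩
            have heq : s \ {a, b} = s \ {a} := by
              ext z
              simp only [Set.mem_diff, Set.mem_insert_iff, Set.mem_singleton_iff, not_or]
              exact ⟨fun ⟨h1, h2, _⟩ => ⟨h1, h2⟩,
                fun ⟨h1, h2⟩ => ⟨h1, h2, fun h => hbns (h ▸ h1)⟩⟩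
            have hpos : 0 < s.ncard := (Set.ncard_pos (Set.toFinite _)).2 ⟨a, ha⟩
            rw [heq, Set.ncard_diff_singleton_of_mem ha]
            omega
          · by_cases hb : b ∈ s
            · have heq : s \ {a, b} = s \ {b} := by
                ext z
                simp only [Set.mem_diff, Set.mem_insert_iff, Set.mem_singleton_iff, not_or]
                exact ⟨fun ⟨h1, _, h3⟩ => ⟨h1, h3⟩,
                  fun ⟨h1, h2⟩ => ⟨h1, fun h => ha (h ▸ h1), h2⟩⟩
              have hpos : 0 < s.ncard := (Set.ncard_pos (Set.toFinite _)).2 ⟨b, hb⟩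
              rw [heq, Set.ncard_diff_singleton_of_mem hb]
              omega
            · have heq : s \ {a, b} = s := by
                ext z
                simp only [Set.mem_diff, Set.mem_insert_iff, Set.mem_singleton_iff, not_or]
                exact ⟨fun ⟨h1, _⟩ => h1,
                  fun h1 => ⟨h1, fun h => ha (h ▸ h1), fun h => hb (h ▸ h1)⟩⟩
              rw [heq]; omega
        calc G.indepNum' = s.ncard := hcs.symm
        _ ≤ (s \ {a, b}).ncard + 1 := hdiff
        _ = (Subtype.val ⁻¹' s : Set V').ncard + 1 := by rw [hct]
        _ ≤ G'.indepNum' + 1 := by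
            have := ncard_le_indepNum ht
            omega
      -- (C)
      have hC : G'.matchingNum + 1 ≤ G.matchingNum := by
        obtain ⟨M', hM', hcM'⟩ := exists_max_matching G'
        have hnotmem : s(a, b) ∉ Sym2.map Subtype.val '' M' := by
          rintro ⟨e', he', heq⟩
          have hmem : a ∈ Sym2.map Subtype.val e' := by rw [heq]; exact Sym2.mem_mk_left a b
          rw [Sym2.mem_map] at hmem
          obtain ⟨p, hp, hpa⟩ := hmem
          exact p.2.1 hpa
        have hmatch : G.IsMatchingSet (insert s(a, b) (Sym2.map Subtype.val '' M')) := by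
          constructor
          · rintro e (rfl | ⟨e', he', rfl⟩)
            · exact hab
            · have hin := hM'.1 he'
              induction e' with
              | h p q => exact hin
          · haveI : Std.Symm (fun e f : Sym2 V => ∀ x, x ∈ e → x ∉ f) :=
              ⟨fun _ _ h => disj_symm h⟩
            refine (Set.pairwise_insert_of_symm).2 ⟨?_, ?_⟩
            · rintro e1 ⟨f1, hf1, rfl⟩ e2 ⟨f2, hf2, rfl⟩ hne x hx1 hx2
              have hfne : f1 ≠ f2 := fun h => hne (congrArg _ h)
              rw [Sym2.mem_map] at hx1 hx2
              obtain ⟨p1, hp1, rfl⟩ := hx1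
              obtain ⟨p2, hp2, hp2e⟩ := hx2
              exact hM'.2 hf1 hf2 hfne p1 hp1 ((Subtype.ext hp2e : p2 = p1) ▸ hp2)
            · rintro e ⟨f, hf, rfl⟩ - x hx1 hx2
              rw [Sym2.mem_map] at hx2
              obtain ⟨p, hp, rfl⟩ := hx2
              rw [Sym2.mem_iff] at hx1
              rcases hx1 with h | h
              · exact p.2.1 h
              · exact p.2.2 h
        have hcnt : (insert s(a, b) (Sym2.map Subtype.val '' M')).ncard
            = G'.matchingNum + 1 := by
          rw [Set.ncard_insert_of_notMem hnotmem (Set.toFinite _),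
            Set.ncard_image_of_injective _ (Sym2.map.injective Subtype.val_injective), hcM']
        calc G'.matchingNum + 1 = _ := hcnt.symm
        _ ≤ G.matchingNum := ncard_le_matchingNum hmatch
      -- (D)
      have hD : G.matchingNum ≤ G'.matchingNum + 1 := by
        obtain ⟨M, hM, hcM⟩ := exists_max_matching G
        set M₀ : Set (Sym2 V) := {e ∈ M | b ∉ e} with hM₀def
        have hM₀sub : M₀ ⊆ M := fun e he => he.1
        have hbmem : ∀ e ∈ M, a ∈ e → b ∈ e := by
          intro e he ha
          have hedge := hM.1 he
          induction e with
          | h p q =>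
            rw [Sym2.mem_iff] at ha ⊢
            rcases ha with rfl | rfl
            · exact Or.inr (hleaf q hedge).symm
            · exact Or.inl (hleaf p hedge.symm).symm
        have hsub : (M \ M₀).Subsingleton := by
          intro e1 he1 e2 he2
          have hb1 : b ∈ e1 := by
            by_contra hb
            exact he1.2 ⟨he1.1, hb⟩
          have hb2 : b ∈ e2 := by
            by_contra hb
            exact he2.2 ⟨he2.1, hb⟩
          by_contra hne
          exact hM.2 he1.1 he2.1 hne b hb1 hb2
        have hcount : M.ncard ≤ M₀.ncard + 1 := by
          have hdle : (M \ M₀).ncard ≤ 1 := by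
            rcases hsub.eq_empty_or_singleton with h | ⟨x, h⟩
            · rw [h]; simp
            · rw [h]; simp
          calc M.ncard = (M₀ ∪ (M \ M₀)).ncard := by rw [Set.union_diff_cancel hM₀sub]
          _ ≤ M₀.ncard + (M \ M₀).ncard := Set.ncard_union_le _ _
          _ ≤ M₀.ncard + 1 := by omega
        have havoid : ∀ e ∈ M₀, a ∉ e ∧ b ∉ e :=
          fun e he => ⟨fun ha => he.2 (hbmem e he.1 ha), he.2⟩
        have himg : Sym2.map Subtype.val '' {e' : Sym2 V' | Sym2.map Subtype.val e' ∈ M₀}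
            = M₀ := by
          apply Set.Subset.antisymm
          · rintro e ⟨e', he', rfl⟩; exact he'
          · intro e he
            obtain ⟨hea, heb⟩ := havoid e he
            induction e with
            | h p q =>
              simp only [Sym2.mem_iff, not_or] at hea heb
              exact ⟨s(⟨p, Ne.symm hea.1, Ne.symm heb.1⟩, ⟨q, Ne.symm hea.2, Ne.symm heb.2⟩),
                he, rfl⟩
        have hmatch' : G'.IsMatchingSet {e' : Sym2 V' | Sym2.map Subtype.val e' ∈ M₀} := by
          constructor
          · intro e' he'
            have hin : Sym2.map Subtype.val e' ∈ G.edgeSet := hM.1 he'.1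
            induction e' with
            | h p q => exact hin
          · intro e1 he1 e2 he2 hne x hx1 hx2
            have hne' : Sym2.map Subtype.val e1 ≠ Sym2.map Subtype.val e2 :=
              fun h => hne (Sym2.map.injective Subtype.val_injective h)
            exact hM.2 he1.1 he2.1 hne' x.1 (Sym2.mem_map.2 ⟨x, hx1, rfl⟩)
              (Sym2.mem_map.2 ⟨x, hx2, rfl⟩)
        have hcnt' : ({e' : Sym2 V' | Sym2.map Subtype.val e' ∈ M₀} : Set (Sym2 V')).ncard
            = M₀.ncard := by
          have h2 := Set.ncard_image_of_injective {e' : Sym2 V' | Sym2.map Subtype.val e' ∈ M₀}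
            (Sym2.map.injective Subtype.val_injective)
          rw [himg] at h2
          exact h2.symm
        calc G.matchingNum = M.ncard := hcM.symm
        _ ≤ M₀.ncard + 1 := hcount
        _ = ({e' : Sym2 V' | Sym2.map Subtype.val e' ∈ M₀} : Set (Sym2 V')).ncard + 1 := by
            rw [hcnt']
        _ ≤ G'.matchingNum + 1 := by
            have := ncard_le_matchingNum hmatch'
            omega
      omega
    · push_neg at hE
      have hind : G.indepNum' = n := by
        refine le_antisymm (indepNum_le ?_) ?_
        · intro s _
          calc s.ncard ≤ (Set.univ : Set V).ncard :=
              Set.ncard_le_ncard (Set.subset_univ s) Set.finite_univ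
          _ = n := by simp [Set.ncard_univ, Nat.card_eq_fintype_card, hcard]
        · have : G.IsIndepSet' Set.univ := fun p _ q _ _ => hE p q
          have h := ncard_le_indepNum this
          rwa [Set.ncard_univ, Nat.card_eq_fintype_card, hcard] at h
      have hmat : G.matchingNum = 0 := by
        refine le_antisymm (matchingNum_le ?_) (Nat.zero_le _)
        intro M hM
        have : M = ∅ := by
          ext e
          simp only [Set.mem_empty_iff_false, iff_false]
          intro he
          have := hM.1 he
          induction e with
          | h p q => exact hE p q this
        simp [this]
      omega

lemma contract_connected {T : SimpleGraph V} (hc : T.Connected) {u v : V}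
    (huv : T.Adj u v) : (T.contractEdge u v).Connected := by
  classical
  have hvne : v ≠ u := huv.ne'
  set g : V → {x : V // x ≠ u} := fun w => if h : w = u then ⟨v, hvne⟩ else ⟨w, h⟩ with hg
  have hadj : ∀ a b, T.Adj a b → (T.contractEdge u v).Reachable (g a) (g b) := by
    intro a b hab
    by_cases ha : a = u
    · have hab' : T.Adj u b := ha ▸ hab
      have hbu : b ≠ u := hab'.ne'
      have hga : g a = ⟨v, hvne⟩ := dif_pos ha
      have hgb : g b = ⟨b, hbu⟩ := dif_neg hbu
      rw [hga, hgb]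
      by_cases hb : b = v
      · rw [show (⟨b, hbu⟩ : {x : V // x ≠ u}) = ⟨v, hvne⟩ from Subtype.ext hb]
      · exact Adj.reachable (contractEdge_adj_iff.2 ⟨fun h => hb (congrArg Subtype.val h).symm,
          Or.inr (Or.inl ⟨rfl, hab'⟩)⟩)
    · by_cases hb : b = u
      · have hab' : T.Adj a u := hb ▸ hab
        have hga : g a = ⟨a, ha⟩ := dif_neg ha
        have hgb : g b = ⟨v, hvne⟩ := dif_pos hb
        rw [hga, hgb]
        by_cases hav : a = v
        · rw [show (⟨a, ha⟩ : {x : V // x ≠ u}) = ⟨v, hvne⟩ from Subtype.ext hav]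
        · exact Adj.reachable (contractEdge_adj_iff.2 ⟨fun h => hav (congrArg Subtype.val h),
            Or.inr (Or.inr ⟨rfl, hab'.symm⟩)⟩)
      · have hga : g a = ⟨a, ha⟩ := dif_neg ha
        have hgb : g b = ⟨b, hb⟩ := dif_neg hb
        rw [hga, hgb]
        exact Adj.reachable (contractEdge_adj_iff.2 ⟨fun h => hab.ne (congrArg Subtype.val h), Or.inl hab⟩)
  rw [connected_iff]
  refine ⟨?_, ⟨⟨v, hvne⟩⟩⟩
  intro x y
  obtain ⟨p⟩ := hc.preconnected x.1 y.1
  have hr := reach_lift g hadj p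
  have hx : g x.1 = x := by rw [hg]; simp only [dif_neg x.2]
  have hy : g y.1 = y := by rw [hg]; simp only [dif_neg y.2]
  rwa [hx, hy] at hr

lemma sym2_map_val_ne {u : V} {x y a b : {w : V // w ≠ u}}
    (h : s(a, b) ≠ s(x, y)) : s(a.1, b.1) ≠ s(x.1, y.1) := by
  intro heq
  apply h
  have := Sym2.map.injective (Subtype.val_injective (p := fun w => w ≠ u))
    (a₁ := s(a, b)) (a₂ := s(x, y))
  exact this (by simpa using heq)

lemma contract_acyclic {T : SimpleGraph V} (hT : T.IsAcyclic) {u v : V}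
    (huv : T.Adj u v) : (T.contractEdge u v).IsAcyclic := by
  classical
  have hbridge := isAcyclic_iff_forall_adj_isBridge.1 hT
  rw [isAcyclic_iff_forall_adj_isBridge]
  intro x y hxy
  rw [isBridge_iff]
  intro hreach
  -- key argument for the "new edge" case
  have key : ∀ x y : {w : V // w ≠ u}, (T.contractEdge u v).Adj x y →
      x.1 = v → T.Adj u y.1 →
      ((T.contractEdge u v) \ fromEdgeSet {s(x, y)}).Reachable x y → False := by
    intro x y hxy hx hy hreach
    set f : Sym2 V := s(u, y.1) with hf
    have hyv : y.1 ≠ v := fun h => hxy.1 (Subtype.ext (hx.trans h.symm))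
    have hlift : ∀ a b : {w : V // w ≠ u},
        ((T.contractEdge u v) \ fromEdgeSet {s(x, y)}).Adj a b →
        (T \ fromEdgeSet {f}).Reachable a.1 b.1 := by
      intro a b hab
      rw [sdiff_adj] at hab
      obtain ⟨⟨hne, hor⟩, hnf⟩ := hab
      rw [fromEdgeSet_adj] at hnf
      push_neg at hnf
      have hnexy : s(a, b) ≠ s(x, y) := fun h => hne (hnf (by rw [h]; rfl))
      rcases hor with hold | ⟨ha, hb⟩ | ⟨hb, ha⟩
      · refine Adj.reachable ?_
        rw [sdiff_adj, fromEdgeSet_adj]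
        refine ⟨hold, ?_⟩
        push_neg
        intro hmem
        rw [Set.mem_singleton_iff, hf, Sym2.eq_iff] at hmem
        rcases hmem with ⟨h1, -⟩ | ⟨-, h2⟩
        · exact absurd h1 a.2
        · exact absurd h2 b.2
      · -- a.1 = v, T.Adj u b.1 : path a - u - b
        have hby : b ≠ y := by
          intro hby
          apply hnexy
          have hax : a = x := Subtype.ext (ha.trans hx.symm)
          rw [hax, hby]
        have e1 : (T \ fromEdgeSet {f}).Adj a.1 u := by
          rw [sdiff_adj, fromEdgeSet_adj]
          refine ⟨ha ▸ huv.symm, ?_⟩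
          push_neg
          intro hmem
          rw [Set.mem_singleton_iff, hf, Sym2.eq_iff] at hmem
          rcases hmem with ⟨h1, -⟩ | ⟨h1, h2⟩
          · exact absurd (ha.symm.trans h1) (Ne.symm huv.ne)
          · exact absurd (ha.symm.trans h1) (Ne.symm hyv)
        have e2 : (T \ fromEdgeSet {f}).Adj u b.1 := by
          rw [sdiff_adj, fromEdgeSet_adj]
          refine ⟨hb, ?_⟩
          push_neg
          intro hmem
          rw [Set.mem_singleton_iff, hf, Sym2.eq_iff] at hmem
          rcases hmem with ⟨-, h2⟩ | ⟨h1, -⟩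
          · exact absurd (Subtype.ext h2) hby
          · exact absurd h1.symm y.2
        exact e1.reachable.trans e2.reachable
      · -- b.1 = v, T.Adj u a.1 : path a - u - b
        have hay : a ≠ y := by
          intro hay
          apply hnexy
          have hbx : b = x := Subtype.ext (hb.trans hx.symm)
          rw [hay, hbx, Sym2.eq_swap]
        have e1 : (T \ fromEdgeSet {f}).Adj a.1 u := by
          rw [sdiff_adj, fromEdgeSet_adj]
          refine ⟨ha.symm, ?_⟩
          push_neg
          intro hmem
          rw [Set.mem_singleton_iff, hf, Sym2.eq_iff] at hmem
          rcases hmem with ⟨h1, -⟩ | ⟨h1, -⟩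
          · exact absurd h1 a.2
          · exact absurd (Subtype.ext h1) hay
        have e2 : (T \ fromEdgeSet {f}).Adj u b.1 := by
          rw [sdiff_adj, fromEdgeSet_adj]
          refine ⟨hb ▸ huv, ?_⟩
          push_neg
          intro hmem
          rw [Set.mem_singleton_iff, hf, Sym2.eq_iff] at hmem
          rcases hmem with ⟨-, h2⟩ | ⟨h1, -⟩
          · exact absurd (h2.symm.trans hb) hyv
          · exact absurd h1.symm y.2
        exact e1.reachable.trans e2.reachable
    obtain ⟨p⟩ := hreach
    have hr : (T \ fromEdgeSet {f}).Reachable x.1 y.1 := reach_lift Subtype.val hlift p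
    have hvu : (T \ fromEdgeSet {f}).Adj v u := by
      rw [sdiff_adj, fromEdgeSet_adj]
      refine ⟨huv.symm, ?_⟩
      push_neg
      intro hmem
      rw [Set.mem_singleton_iff, hf, Sym2.eq_iff] at hmem
      rcases hmem with ⟨h1, -⟩ | ⟨h1, -⟩
      · exact absurd h1.symm huv.ne
      · exact absurd h1.symm hyv
    have : (T \ fromEdgeSet {f}).Reachable u y.1 := (hvu.symm.reachable.trans (hx ▸ hr))
    exact isBridge_iff.1 (hbridge hy) this
  by_cases hold : T.Adj x.1 y.1
  · -- old edge case
    set f : Sym2 V := s(x.1, y.1) with hf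
    have hlift : ∀ a b : {w : V // w ≠ u},
        ((T.contractEdge u v) \ fromEdgeSet {s(x, y)}).Adj a b →
        (T \ fromEdgeSet {f}).Reachable a.1 b.1 := by
      intro a b hab
      rw [sdiff_adj] at hab
      obtain ⟨⟨hne, hor⟩, hnf⟩ := hab
      rw [fromEdgeSet_adj] at hnf
      push_neg at hnf
      have hnexy : s(a, b) ≠ s(x, y) := fun h => hne (hnf (by rw [h]; rfl))
      rcases hor with hold' | ⟨ha, hb⟩ | ⟨hb, ha⟩
      · refine Adj.reachable ?_
        rw [sdiff_adj, fromEdgeSet_adj]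
        refine ⟨hold', ?_⟩
        push_neg
        intro hmem
        exact absurd (Set.mem_singleton_iff.1 hmem) (sym2_map_val_ne hnexy)
      · have e1 : (T \ fromEdgeSet {f}).Adj a.1 u := by
          rw [sdiff_adj, fromEdgeSet_adj]
          refine ⟨ha ▸ huv.symm, ?_⟩
          push_neg
          intro hmem
          rw [Set.mem_singleton_iff, hf, Sym2.eq_iff] at hmem
          rcases hmem with ⟨-, h2⟩ | ⟨-, h2⟩
          · exact absurd h2.symm y.2
          · exact absurd h2.symm x.2
        have e2 : (T \ fromEdgeSet {f}).Adj u b.1 := by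
          rw [sdiff_adj, fromEdgeSet_adj]
          refine ⟨hb, ?_⟩
          push_neg
          intro hmem
          rw [Set.mem_singleton_iff, hf, Sym2.eq_iff] at hmem
          rcases hmem with ⟨h1, -⟩ | ⟨h1, -⟩
          · exact absurd h1.symm x.2
          · exact absurd h1.symm y.2
        exact e1.reachable.trans e2.reachable
      · have e1 : (T \ fromEdgeSet {f}).Adj a.1 u := by
          rw [sdiff_adj, fromEdgeSet_adj]
          refine ⟨ha.symm, ?_⟩
          push_neg
          intro hmem
          rw [Set.mem_singleton_iff, hf, Sym2.eq_iff] at hmem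
          rcases hmem with ⟨-, h2⟩ | ⟨-, h2⟩
          · exact absurd h2.symm y.2
          · exact absurd h2.symm x.2
        have e2 : (T \ fromEdgeSet {f}).Adj u b.1 := by
          rw [sdiff_adj, fromEdgeSet_adj]
          refine ⟨hb ▸ huv, ?_⟩
          push_neg
          intro hmem
          rw [Set.mem_singleton_iff, hf, Sym2.eq_iff] at hmem
          rcases hmem with ⟨h1, -⟩ | ⟨h1, -⟩
          · exact absurd h1.symm x.2
          · exact absurd h1.symm y.2
        exact e1.reachable.trans e2.reachable
    obtain ⟨p⟩ := hreach
    have hr : (T \ fromEdgeSet {f}).Reachable x.1 y.1 := reach_lift Subtype.val hlift p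
    exact isBridge_iff.1 (hbridge hold) hr
  · rcases hxy.2 with hold' | ⟨hx, hy⟩ | ⟨hy, hx⟩
    · exact hold hold'
    · exact key x y hxy hx hy hreach
    · refine key y x hxy.symm hy hx ?_
      rw [show s(y, x) = s(x, y) from Sym2.eq_swap]
      exact hreach.symm

lemma sym2_nonempty {A : Type*} (e : Sym2 A) : ∃ x, x ∈ e := by
  induction e with
  | h x y => exact ⟨x, Sym2.mem_mk_left x y⟩

lemma contract_indep_le [Fintype V] (T : SimpleGraph V) (u v : V) :
    (T.contractEdge u v).indepNum' ≤ T.indepNum' := by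
  classical
  obtain ⟨s', hs', hcs'⟩ := exists_max_indep (T.contractEdge u v)
  have hindep : T.IsIndepSet' (Subtype.val '' s') := by
    rintro p ⟨p', hp', rfl⟩ q ⟨q', hq', rfl⟩ hne hadj
    have hne' : p' ≠ q' := fun h => hne (congrArg Subtype.val h)
    exact hs' hp' hq' hne' (contractEdge_adj_iff.2 ⟨hne', Or.inl hadj⟩)
  have := ncard_le_indepNum hindep
  rwa [Set.ncard_image_of_injective _ Subtype.val_injective, hcs'] at this

lemma contract_matching_le [Fintype V] [DecidableEq V] (T : SimpleGraph V) {u v : V}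
    (huv : T.Adj u v) : (T.contractEdge u v).matchingNum ≤ T.matchingNum := by
  classical
  obtain ⟨M', hM', hcM'⟩ := exists_max_matching (T.contractEdge u v)
  set φ : Sym2 {x : V // x ≠ u} → Sym2 V := fun e =>
    if Sym2.map Subtype.val e ∈ T.edgeSet then Sym2.map Subtype.val e
    else Sym2.map (fun p : {x : V // x ≠ u} => if p.1 = v then u else p.1) e with hφ
  -- φ maps edges of M' to edges of T
  have hedge : ∀ e ∈ M', φ e ∈ T.edgeSet := by
    intro e he
    have hTe := hM'.1 he
    by_cases hin : Sym2.map Subtype.val e ∈ T.edgeSet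
    · rw [hφ]; simpa [hin] using hin
    · rw [hφ]
      simp only [hin, if_false]
      induction e with
      | h p q =>
        obtain ⟨hne, hor⟩ := contractEdge_adj_iff.1 hTe
        rcases hor with hold | ⟨hp, hq⟩ | ⟨hq, hp⟩
        · exact absurd hold hin
        · have hqv : q.1 ≠ v := fun h => hne (Subtype.ext (hp.trans h.symm))
          rw [Sym2.map_pair_eq, if_pos hp, if_neg hqv]
          exact T.mem_edgeSet.2 hq
        · have hpv : p.1 ≠ v := fun h => hne (Subtype.ext (h.trans hq.symm))
          rw [Sym2.map_pair_eq, if_pos hq, if_neg hpv]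
          exact T.mem_edgeSet.2 hp.symm
  -- vertex control
  have hkey : ∀ e : Sym2 {x : V // x ≠ u}, ∀ w, w ∈ φ e →
      (w ≠ u → w ∈ Sym2.map Subtype.val e) ∧ (w = u → v ∈ Sym2.map Subtype.val e) := by
    intro e w hw
    by_cases hin : Sym2.map Subtype.val e ∈ T.edgeSet
    · rw [hφ] at hw
      simp only [hin, if_true] at hw
      refine ⟨fun _ => hw, fun hwu => ?_⟩
      rw [Sym2.mem_map] at hw
      obtain ⟨p, -, hp⟩ := hw
      exact absurd (hp.trans hwu) p.2
    · rw [hφ] at hw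
      simp only [hin, if_false] at hw
      rw [Sym2.mem_map] at hw
      obtain ⟨p, hp, hpe⟩ := hw
      by_cases hpv : p.1 = v
      · rw [if_pos hpv] at hpe
        refine ⟨fun hwu => absurd hpe.symm hwu, fun _ => ?_⟩
        rw [Sym2.mem_map]
        exact ⟨p, hp, hpv⟩
      · rw [if_neg hpv] at hpe
        refine ⟨fun _ => ?_, fun hwu => absurd (hpe.trans hwu) p.2⟩
        rw [Sym2.mem_map]
        exact ⟨p, hp, hpe⟩
  -- disjointness of images
  have hdisj : ∀ e1 ∈ M', ∀ e2 ∈ M', e1 ≠ e2 → ∀ x, x ∈ φ e1 → x ∉ φ e2 := by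
    intro e1 he1 e2 he2 hne x hx1 hx2
    have hM'disj := hM'.2 he1 he2 hne
    have hmapdisj : ∀ w, w ∈ Sym2.map Subtype.val e1 → w ∉ Sym2.map Subtype.val e2 := by
      intro w hw1 hw2
      rw [Sym2.mem_map] at hw1 hw2
      obtain ⟨p1, hp1, hp1e⟩ := hw1
      obtain ⟨p2, hp2, hp2e⟩ := hw2
      have : p1 = p2 := Subtype.ext (hp1e.trans hp2e.symm)
      exact hM'disj p1 hp1 (this ▸ hp2)
    by_cases hxu : x = u
    · exact hmapdisj v ((hkey e1 x hx1).2 hxu) ((hkey e2 x hx2).2 hxu)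
    · exact hmapdisj x ((hkey e1 x hx1).1 hxu) ((hkey e2 x hx2).1 hxu)
  have hmatch : T.IsMatchingSet (φ '' M') := by
    constructor
    · rintro e ⟨e', he', rfl⟩
      exact hedge e' he'
    · rintro e1 ⟨f1, hf1, rfl⟩ e2 ⟨f2, hf2, rfl⟩ hne x hx1 hx2
      have hfne : f1 ≠ f2 := fun h => hne (congrArg φ h)
      exact hdisj f1 hf1 f2 hf2 hfne x hx1 hx2
  have hinj : Set.InjOn φ M' := by
    intro e1 he1 e2 he2 heq
    by_contra hne
    obtain ⟨w, hw⟩ := sym2_nonempty (φ e1)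
    exact hdisj e1 he1 e2 he2 hne w hw (heq ▸ hw)
  have := ncard_le_matchingNum hmatch
  rwa [Set.ncard_image_of_injOn hinj, hcM'] at this


/-- Contracting an edge of a tree on `n` vertices gives a tree on `n - 1`
vertices, and exactly one of the following holds: the independence number drops by one and the
matching number stays the same, or the matching number drops by one and the independence number
stays the same. -/
theorem stmt13 {V : Type*} [Fintype V] [DecidableEq V] (T : SimpleGraph V) (hT : T.IsTree) (n : ℕ)
    (hn : Fintype.card V = n) (u v : V) (huv : T.Adj u v) :
    (T.contractEdge u v).IsTree ∧ Fintype.card {x : V // x ≠ u} = n - 1 ∧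
      Xor'
        ((T.contractEdge u v).indepNum' = T.indepNum' - 1 ∧
          (T.contractEdge u v).matchingNum = T.matchingNum)
        ((T.contractEdge u v).matchingNum = T.matchingNum - 1 ∧
          (T.contractEdge u v).indepNum' = T.indepNum') := by
  classical
  obtain ⟨hconn, hacyc⟩ := (isTree_iff T).1 hT
  have hconn' := contract_connected hconn huv
  have hacyc' := contract_acyclic hacyc huv
  have htree : (T.contractEdge u v).IsTree := (isTree_iff _).2 ⟨hconn', hacyc'⟩
  have hcard2 : Fintype.card {x : V // x ≠ u} = n - 1 := by
    rw [Fintype.card_subtype]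
    have : (Finset.univ.filter fun w : V => w ≠ u) = Finset.univ \ {u} := by
      ext w; simp
    rw [this, Finset.card_sdiff_of_subset (Finset.subset_univ _), Finset.card_singleton,
      Finset.card_univ, hn]
  have hn2 : 2 ≤ n := by
    have h2 : ({u, v} : Finset V).card ≤ Fintype.card V := Finset.card_le_univ _
    rw [Finset.card_insert_of_notMem (by simp [huv.ne]), Finset.card_singleton, hn] at h2
    exact h2
  have hGK1 := forest_GK n T hacyc hn
  have hGK2 := forest_GK (n - 1) (T.contractEdge u v) hacyc' hcard2
  have h1 := contract_indep_le T u v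
  have h2 := contract_matching_le T huv
  have hα : 1 ≤ T.indepNum' := by
    have : T.IsIndepSet' {v} := Set.pairwise_singleton _ _
    have h := ncard_le_indepNum this
    rwa [Set.ncard_singleton] at h
  have hμ : 1 ≤ T.matchingNum := by
    have : T.IsMatchingSet {s(u, v)} := ⟨by simpa using huv, Set.pairwise_singleton _ _⟩
    have h := ncard_le_matchingNum this
    rwa [Set.ncard_singleton] at h
  refine ⟨htree, hcard2, ?_⟩
  rw [Xor', Xor]
  omega
end
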